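/- Let λ > 0 and k ≥ 1 be an integer, and let F̄(i) = ∑_{j≥i} e^{-λ} λ^j / j! denote the upper tail of the Poisson(λ) distribution. Then F̄(k-1)/F̄(k) ≤ 1 + k/λ. -/

import Mathlib

theorem poisson_tail_ratio_le (lam : ℝ) (hlam : 0 < lam) (k : ℕ) (hk : 1 ≤ k)
    (Fbar : ℕ → ℝ)
    (hF : ∀ i : ℕ, Fbar i = ∑' j : ℕ, if i ≤ j then Real.exp (-lam) * lam ^ j / (Nat.factorial j) else 0) :
    Fbar (k - 1) / Fbar k ≤ 1 + k / lam := by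
  set p : ℕ → ℝ := fun j => Real.exp (-lam) * lam ^ j / (Nat.factorial j) with hp
  have hppos : ∀ j, 0 < p j := fun j => by
    apply div_pos (mul_pos (Real.exp_pos _) (pow_pos hlam _))
    exact_mod_cast Nat.factorial_pos j
  have hsum : Summable p := by
    simpa [hp, mul_div_assoc] using (Real.summable_pow_div_factorial lam).mul_left (Real.exp (-lam))
  have hsumI : ∀ i, Summable (fun j => if i ≤ j then p j else 0) := fun i => by
    apply hsum.of_nonneg_of_le (fun j => by positivity) (fun j => ?_)
    split
    · exact le_rfl
    · exact (hppos j).le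
  have hFpos : ∀ i, 0 < Fbar i := fun i => by
    rw [hF i]
    exact Summable.tsum_pos (hsumI i) (fun j => by positivity) i (by simp only [le_refl, if_true]; exact hppos i)
  have hle : ∀ i, p i ≤ Fbar i := fun i => by
    rw [hF i]
    have := Summable.le_tsum (hsumI i) i (fun j _ => by positivity)
    simpa using this
  obtain ⟨m, rfl⟩ : ∃ m, k = m + 1 := ⟨k - 1, by omega⟩
  have hsplit : Fbar m = p m + Fbar (m + 1) := by
    rw [hF m, hF (m + 1), Summable.tsum_eq_add_tsum_ite (hsumI m) m]
    simp only [le_refl, if_true]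
    congr 1
    apply tsum_congr
    intro j
    rcases lt_trichotomy j m with h | h | h
    · simp [hp, h.not_ge, show ¬ m + 1 ≤ j by omega, h.ne]
    · simp [h]
    · simp [hp, h.ne', h.le, show m + 1 ≤ j by omega]
  have hkey : p m ≤ ((m + 1 : ℕ) : ℝ) / lam * Fbar (m + 1) := by
    have h1 : p m = ((m + 1 : ℕ) : ℝ) / lam * p (m + 1) := by
      simp only [hp]
      rw [Nat.factorial_succ]
      field_simp
      push_cast
      ring
    rw [h1]
    have hc : (0 : ℝ) ≤ ((m + 1 : ℕ) : ℝ) / lam := by positivity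
    exact mul_le_mul_of_nonneg_left (hle (m + 1)) hc
  rw [div_le_iff₀ (hFpos (m + 1))]
  have : Fbar (m + 1 - 1) = Fbar m := by norm_num
  rw [this, hsplit]
  nlinarith [hFpos (m + 1), hkey]
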